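/- For fixed α ∈ (0,1), ρ, d > 0, and T > 0, the function K ↦ τ(K) = ρ²d⁴KN / (ρ²d⁴K(K - αT) + t(K)²), where t(K) = √((1-α)(ρd²K + α)) + √(α(ρd²K + 1-α)), has setting its derivative to zero equivalent to f(ρd²K) = 0, where f(x) = -x² - x√(α - α²)(√((x+α)/(x+1-α)) + √((x+1-α)/(x+α))) + 2√((α-α²)(x+α)(x+1-α)) + 2(α - α²). -/

import Mathlib

/-- `t(K) = √((1-α)(ρd²K+α)) + √(α(ρd²K+1-α))`. -/
noncomputable def tAux (α ρ d K : ℝ) : ℝ :=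
  Real.sqrt ((1 - α) * (ρ * d ^ 2 * K + α)) + Real.sqrt (α * (ρ * d ^ 2 * K + 1 - α))

/-- The effective SNR `τ(K) = ρ²d⁴KN / (ρ²d⁴K(K-αT) + t(K)²)`. -/
noncomputable def tauUser (α T ρ d Nr K : ℝ) : ℝ :=
  ρ ^ 2 * d ^ 4 * K * Nr / (ρ ^ 2 * d ^ 4 * K * (K - α * T) + (tAux α ρ d K) ^ 2)

/-- The function `f` of equation (44) characterizing the optimal user number. -/
noncomputable def fOpt (α x : ℝ) : ℝ :=
  -x ^ 2 -
    x * Real.sqrt (α - α ^ 2) *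
      (Real.sqrt ((x + α) / (x + 1 - α)) + Real.sqrt ((x + 1 - α) / (x + α))) +
    2 * Real.sqrt ((α - α ^ 2) * (x + α) * (x + 1 - α)) + 2 * (α - α ^ 2)

/-- For `K ≥ αT`, the stationarity condition `dτ/dK = 0` is equivalent to `f(ρd²K) = 0`. -/
theorem deriv_tauUser_eq_zero_iff (α T ρ d Nr : ℝ) (hα : α ∈ Set.Ioo (0 : ℝ) 1)
    (hT : 0 < T) (hρ : 0 < ρ) (hd : 0 < d) (hN : 0 < Nr) :
    ∀ K : ℝ, α * T ≤ K →
      (deriv (tauUser α T ρ d Nr) K = 0 ↔ fOpt α (ρ * d ^ 2 * K) = 0) := by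
  obtain ⟨hα0, hα1⟩ := hα
  intro K hK
  have hK0 : 0 < K := lt_of_lt_of_le (by positivity) hK
  have hx : 0 < ρ * d ^ 2 * K := by positivity
  have h1α : 0 < 1 - α := by linarith
  have hxa : 0 < ρ * d ^ 2 * K + α := by linarith
  have hxb : 0 < ρ * d ^ 2 * K + 1 - α := by linarith
  set a := Real.sqrt (ρ * d ^ 2 * K + α) with hadef
  set b := Real.sqrt (ρ * d ^ 2 * K + 1 - α) with hbdef
  set p := Real.sqrt α with hpdef
  set q := Real.sqrt (1 - α) with hqdef
  have ha0 : 0 < a := Real.sqrt_pos.mpr hxa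
  have hb0 : 0 < b := Real.sqrt_pos.mpr hxb
  have hp0 : 0 < p := Real.sqrt_pos.mpr hα0
  have hq0 : 0 < q := Real.sqrt_pos.mpr h1α
  have ha2 : a ^ 2 = ρ * d ^ 2 * K + α := Real.sq_sqrt hxa.le
  have hb2 : b ^ 2 = ρ * d ^ 2 * K + 1 - α := Real.sq_sqrt hxb.le
  have hp2 : p ^ 2 = α := Real.sq_sqrt hα0.le
  have hq2 : q ^ 2 = 1 - α := Real.sq_sqrt h1α.le
  have hs1 : Real.sqrt ((1 - α) * (ρ * d ^ 2 * K + α)) = q * a :=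
    Real.sqrt_mul h1α.le _
  have hs2 : Real.sqrt (α * (ρ * d ^ 2 * K + 1 - α)) = p * b := by
    rw [show α * (ρ * d ^ 2 * K + 1 - α) = α * (ρ * d ^ 2 * K + 1 - α) from rfl,
      Real.sqrt_mul hα0.le]
  have htval : tAux α ρ d K = q * a + p * b := by
    rw [tAux, hs1, hs2]
  -- derivative of tAux
  have hta : HasDerivAt (fun y => Real.sqrt ((1 - α) * (ρ * d ^ 2 * y + α)))
      ((1 - α) * (ρ * d ^ 2) / (2 * (q * a))) K := by
    have h1 : HasDerivAt (fun y => (1 - α) * (ρ * d ^ 2 * y + α)) ((1 - α) * (ρ * d ^ 2)) K := by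
      simpa using (((hasDerivAt_id K).const_mul (ρ * d ^ 2)).add_const α).const_mul (1 - α)
    have := h1.sqrt (by positivity)
    simpa [hs1] using this
  have htb : HasDerivAt (fun y => Real.sqrt (α * (ρ * d ^ 2 * y + 1 - α)))
      (α * (ρ * d ^ 2) / (2 * (p * b))) K := by
    have h1 : HasDerivAt (fun y => α * (ρ * d ^ 2 * y + 1 - α)) (α * (ρ * d ^ 2)) K := by
      have h0 : (fun y : ℝ => α * (ρ * d ^ 2 * y + 1 - α))
          = fun y => α * (ρ * d ^ 2 * y) + α * (1 - α) := by funext y; ring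
      rw [h0]
      simpa using (((hasDerivAt_id K).const_mul (ρ * d ^ 2)).const_mul α).add_const (α * (1 - α))
    have := h1.sqrt (by positivity)
    simpa [hs2] using this
  set t' : ℝ := (1 - α) * (ρ * d ^ 2) / (2 * (q * a)) + α * (ρ * d ^ 2) / (2 * (p * b)) with ht'def
  have ht : HasDerivAt (tAux α ρ d) t' K := hta.add htb
  -- derivative of denominator
  set D : ℝ := ρ ^ 2 * d ^ 4 * K * (K - α * T) + (q * a + p * b) ^ 2 with hDdef
  set D' : ℝ := (ρ ^ 2 * d ^ 4 * (K - α * T) + ρ ^ 2 * d ^ 4 * K) + 2 * (q * a + p * b) * t'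
    with hD'def
  have hDp : HasDerivAt (fun y => ρ ^ 2 * d ^ 4 * y * (y - α * T) + (tAux α ρ d y) ^ 2) D' K := by
    have h1 : HasDerivAt (fun y => ρ ^ 2 * d ^ 4 * y * (y - α * T))
        (ρ ^ 2 * d ^ 4 * (K - α * T) + ρ ^ 2 * d ^ 4 * K) K := by
      have : HasDerivAt (fun y : ℝ => ρ ^ 2 * d ^ 4 * y * (y - α * T)) (ρ ^ 2 * d ^ 4 * 1 * (id K - α * T) + ρ ^ 2 * d ^ 4 * id K * 1) K := ((hasDerivAt_id K).const_mul (ρ ^ 2 * d ^ 4)).fun_mul ((hasDerivAt_id K).sub_const (α * T))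
      convert this using 1
      simp only [id_eq]; ring
    have h2 : HasDerivAt (fun y => (tAux α ρ d y) ^ 2) (2 * (q * a + p * b) * t') K := by
      have := ht.fun_pow 2
      simpa [htval] using this
    exact h1.add h2
  have hDval : ρ ^ 2 * d ^ 4 * K * (K - α * T) + (tAux α ρ d K) ^ 2 = D := by
    rw [htval]
  have hDpos : 0 < D := by
    have h1 : 0 ≤ ρ ^ 2 * d ^ 4 * K * (K - α * T) := by
      apply mul_nonneg (by positivity); linarith
    have h2 : 0 < (q * a + p * b) ^ 2 := by positivity
    rw [hDdef]; linarith
  have hnum : HasDerivAt (fun y => ρ ^ 2 * d ^ 4 * y * Nr) (ρ ^ 2 * d ^ 4 * Nr) K := by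
    simpa using ((hasDerivAt_id K).const_mul (ρ ^ 2 * d ^ 4)).mul_const Nr
  have hdiv : HasDerivAt (tauUser α T ρ d Nr)
      ((ρ ^ 2 * d ^ 4 * Nr * D - ρ ^ 2 * d ^ 4 * K * Nr * D') / D ^ 2) K := by
    have := hnum.div hDp (by rw [hDval]; exact hDpos.ne')
    rw [hDval] at this
    exact this
  rw [hdiv.deriv, div_eq_zero_iff]
  have hD2 : D ^ 2 ≠ 0 := pow_ne_zero _ hDpos.ne'
  rw [or_iff_left hD2]
  -- key algebraic identity
  have hkey : ρ ^ 2 * d ^ 4 * Nr * D - ρ ^ 2 * d ^ 4 * K * Nr * D'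
      = ρ ^ 2 * d ^ 4 * Nr * fOpt α (ρ * d ^ 2 * K) := by
    have e1 : Real.sqrt (α - α ^ 2) = p * q := by
      rw [show α - α ^ 2 = α * (1 - α) by ring, Real.sqrt_mul hα0.le]
    have e2 : Real.sqrt ((ρ * d ^ 2 * K + α) / (ρ * d ^ 2 * K + 1 - α)) = a / b :=
      Real.sqrt_div hxa.le _
    have e3 : Real.sqrt ((ρ * d ^ 2 * K + 1 - α) / (ρ * d ^ 2 * K + α)) = b / a :=
      Real.sqrt_div hxb.le _
    have e4 : Real.sqrt ((α - α ^ 2) * (ρ * d ^ 2 * K + α) * (ρ * d ^ 2 * K + 1 - α))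
        = p * q * (a * b) := by
      rw [show (α - α ^ 2) * (ρ * d ^ 2 * K + α) * (ρ * d ^ 2 * K + 1 - α)
          = (α * (1 - α)) * ((ρ * d ^ 2 * K + α) * (ρ * d ^ 2 * K + 1 - α)) by ring,
        Real.sqrt_mul (by positivity), Real.sqrt_mul hα0.le, Real.sqrt_mul hxa.le]
    rw [fOpt, e1, e2, e3, e4, hDdef, hD'def, ht'def]
    field_simp
    linear_combination (p*q*a*b*q^2) * ha2 + (p*q*a*b*p^2) * hb2 + (p*q*a*b*α + ρ*d^2*K*(q*a+p*b)*p*b) * hq2 + (p*q*a*b*(1-α) + ρ*d^2*K*(q*a+p*b)*q*a) * hp2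
  rw [hkey, mul_eq_zero, or_iff_right (by positivity : (ρ:ℝ) ^ 2 * d ^ 4 * Nr ≠ 0)]
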